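/- Let X be a hyperinner product space over ℝ. Then (u,u) ≤ a²(x,x) for every u ∈ a∘x, x ∈ X, a ∈ ℝ with a ≠ 0. -/

import Mathlib

open scoped BigOperators

/-- A weak hypervector space over `F` (ℝ or ℂ): a commutative hypergroup `(X, #)`
together with a scalar hyperproduct `∘ : F × X → P*(X)`. -/
structure WeakHVS (F : Type*) [RCLike F] (X : Type*) where
  hop : X → X → Set X
  hop_nonempty : ∀ x y, (hop x y).Nonempty
  zero : X
  neg : X → X
  comm : ∀ x y, hop x y = hop y x
  hassoc : ∀ x y z,
    ((⋃ u ∈ hop x y, hop u z) ∩ (⋃ v ∈ hop y z, hop x v)).Nonempty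
  zero_mem : ∀ x, zero ∈ hop x (neg x) ∧ zero ∈ hop (neg x) x
  neg_unique : ∀ x y, zero ∈ hop x y → zero ∈ hop y x → y = neg x
  zero_unique : ∀ z : X, (∀ x, ∃! y, z ∈ hop x y ∧ z ∈ hop y x) → z = zero
  hmem : ∀ x y, x ∈ (⋃ u ∈ hop x y, hop u (neg y)) ∩ hop x zero
  smul : F → X → Set X
  smul_nonempty : ∀ a x, (smul a x).Nonempty
  /-- (1) weak right distributivity -/
  distrib_r : ∀ (a : F) (x y : X),
    ((⋃ u ∈ hop x y, smul a u) ∩ (⋃ u ∈ smul a x, ⋃ v ∈ smul a y, hop u v)).Nonempty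
  /-- (2) weak left distributivity -/
  distrib_l : ∀ (a b : F) (x : X),
    ((smul (a + b) x) ∩ (⋃ u ∈ smul a x, ⋃ v ∈ smul b x, hop u v)).Nonempty
  /-- (3) -/
  smul_assoc : ∀ (a b : F) (x : X), (⋃ y ∈ smul b x, smul a y) = smul (a * b) x
  /-- (4) -/
  smul_neg : ∀ (a : F) (x : X),
    smul a (neg x) = smul (-a) x ∧ smul (-a) x = neg '' smul a x
  /-- (5) -/
  one_smul_mem : ∀ x, x ∈ smul 1 x


/-- A hyperinner product space: a weak hypervector space with an inner product
satisfying axioms (1)–(7) of Definition 3.8, with chosen essential points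
`essAdd x y = e_{x#y}` and `essSmul a x = e_{a∘x}`. -/
structure HyperInnerSpace (F : Type*) [RCLike F] (X : Type*) extends WeakHVS F X where
  ip : X → X → F
  /-- (1) -/
  ip_pos : ∀ x, x ≠ zero → 0 < RCLike.re (ip x x)
  /-- (2) -/
  ip_self_eq_zero : ∀ x, ip x x = 0 ↔ x = zero
  essAdd : X → X → X
  essAdd_spec : ∀ x y,
    (zero ∈ hop x y ∧ essAdd x y = zero) ∨
    (zero ∉ hop x y ∧ essAdd x y ∈ hop x y ∧ x ∈ hop (essAdd x y) (neg y))
  /-- (3) -/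
  ip_add : ∀ x y z, ip x z + ip y z = ip (essAdd x y) z
  /-- (4) -/
  ip_conj_symm : ∀ x y, ip y x = starRingEnd F (ip x y)
  essSmul : F → X → X
  essSmul_spec : ∀ (a : F) (x : X),
    (a = 0 ∧ essSmul a x = zero) ∨
    (a ≠ 0 ∧ essSmul a x ∈ smul a x ∧ x ∈ smul a⁻¹ (essSmul a x))
  /-- (5) -/
  ip_smul : ∀ (a : F) (x y : X), a * ip x y = ip (essSmul a x) y
  /-- (6) -/
  ip_le_essAdd : ∀ x y, ∀ u ∈ hop x y,
    RCLike.re (ip u u) ≤ RCLike.re (ip (essAdd x y) (essAdd x y))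
  /-- (7) -/
  ip_le_one_smul : ∀ x, ∀ u ∈ smul 1 x, RCLike.re (ip u u) ≤ RCLike.re (ip x x)

/-- Over ℝ: `(u, u) ≤ a² (x, x)` for every `u ∈ a∘x`, `a ≠ 0`. -/
theorem ip_smul_sq_bound {X : Type*} (H : HyperInnerSpace ℝ X)
    (a : ℝ) (ha : a ≠ 0) (x : X) :
    ∀ u ∈ H.smul a x, H.ip u u ≤ a ^ 2 * H.ip x x := by
  intro u hu
  set e := H.essSmul a⁻¹ u with he
  have hspec := H.essSmul_spec a⁻¹ u
  rcases hspec with ⟨h0, _⟩ | ⟨_, hmem, _⟩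
  · exact absurd (inv_eq_zero.mp h0) ha
  -- e ∈ smul 1 x
  have hone : e ∈ H.smul (1 : ℝ) x := by
    have : e ∈ ⋃ y ∈ H.smul a x, H.smul a⁻¹ y := by
      exact Set.mem_biUnion hu hmem
    rw [H.smul_assoc] at this
    rwa [inv_mul_cancel₀ ha] at this
  have hle : H.ip e e ≤ H.ip x x := by
    have := H.ip_le_one_smul x e hone
    simpa using this
  -- ip e e = a⁻¹ * a⁻¹ * ip u u
  have h1 : a⁻¹ * H.ip u e = H.ip e e := H.ip_smul a⁻¹ u e
  have h2 : a⁻¹ * H.ip u u = H.ip e u := H.ip_smul a⁻¹ u u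
  have hsymm : H.ip u e = H.ip e u := by
    rw [H.ip_conj_symm e u]; simp
  have key : H.ip e e = a⁻¹ * (a⁻¹ * H.ip u u) := by
    rw [← h1, hsymm, ← h2]
  have hupos : H.ip u u = a ^ 2 * H.ip e e := by
    rw [key, ← mul_assoc, ← mul_assoc, sq, mul_assoc a a, mul_inv_cancel₀ ha, mul_one, mul_inv_cancel₀ ha, one_mul]
  rw [hupos]
  have ha2 : (0 : ℝ) ≤ a ^ 2 := sq_nonneg a
  exact mul_le_mul_of_nonneg_left hle ha2
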